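/- Let Γ be a discrete subgroup of ℝ^k, v ∈ ℝ^k not in the ℝ-span of Γ, and Λ ⊂ ℝ^k a discrete subgroup containing Γ and v whose ℝ-span equals span(Γ) + ℝv. Then ‖Λ‖ ≤ k·‖Γ‖·‖v‖. -/

import Mathlib

/-- The Plücker coordinate at `e_I` of `v₁ ∧ ⋯ ∧ v_j`: the determinant of the `j × j`
matrix of the coordinates of `v₁, …, v_j` in the (sorted) positions `I`.  For `j = 0`
this is the empty determinant `1`, matching the convention `‖{0}‖ = 1`. -/
noncomputable def multiCoord {k j : ℕ} (v : Fin j → (Fin k → ℝ)) (I : Finset (Fin k))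
    (hI : I.card = j) : ℝ :=
  Matrix.det (Matrix.of fun s t => v s ((I.orderIsoOfFin hI t : Fin k)))

/-- The norm `‖Γ‖` of a discrete subgroup with ℤ-basis `v₁, …, v_j`: the sup-norm of
the coefficients of `v₁ ∧ ⋯ ∧ v_j` in the standard basis of `⋀^j(ℝ^k)`. -/
noncomputable def subgroupNorm {k j : ℕ} (v : Fin j → (Fin k → ℝ)) : ℝ :=
  ⨆ I : {s : Finset (Fin k) // s.card = j}, |multiCoord v I.1 I.2|

open Submodule in
lemma zbasis_linInd {E : Type*} [NormedAddCommGroup E] [NormedSpace ℝ E] [FiniteDimensional ℝ E]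
    (L : Submodule ℤ E) [DiscreteTopology L] {ι : Type*} (b : Module.Basis ι ℤ L) :
    LinearIndependent ℝ (fun i => (b i : E)) := by
  set F : Submodule ℝ E := Submodule.span ℝ (L : Set E) with hF
  set L' : Submodule ℤ F := ZLattice.comap ℝ L F.subtype with hL'
  haveI hdisc : DiscreteTopology L' :=
    ZLattice.comap_discreteTopology ℝ L continuous_subtype_val Subtype.val_injective
  have himg : (F.subtype '' (L' : Set F)) = (L : Set E) := by
    ext x
    constructor
    · rintro ⟨y, hy, rfl⟩; exact hy
    · intro hx; exact ⟨⟨x, subset_span hx⟩, hx, rfl⟩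
  haveI hzl : IsZLattice ℝ L' := by
    constructor
    apply Submodule.map_injective_of_injective (f := F.subtype) Subtype.val_injective
    rw [Submodule.map_span, himg, Submodule.map_top, Submodule.range_subtype]
  let e : L ≃ₗ[ℤ] L' :=
    { toFun := fun x => ⟨⟨x.1, subset_span x.2⟩, x.2⟩
      map_add' := fun x y => rfl
      map_smul' := fun m x => rfl
      invFun := fun y => ⟨y.1.1, y.2⟩
      left_inv := fun x => rfl
      right_inv := fun y => rfl }
  have hli := ((b.map e).ofZLatticeBasis ℝ L').linearIndependent
  have h2 := hli.map' F.subtype (ker_subtype F)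
  have heq : (⇑F.subtype ∘ ⇑((b.map e).ofZLatticeBasis ℝ L')) = fun i => (b i : E) := by
    funext i
    simp only [Function.comp_apply, Module.Basis.ofZLatticeBasis_apply, Module.Basis.map_apply]
    rfl
  rwa [heq] at h2


lemma colId {k n : ℕ} (I : Finset (Fin k)) (hI : I.card = n + 1) (t : Fin (n + 1))
    (h' : (I.erase (I.orderEmbOfFin hI t)).card = n) :
    (fun u => I.orderEmbOfFin hI (t.succAbove u)) =
      ⇑((I.erase (I.orderEmbOfFin hI t)).orderEmbOfFin h') := by
  refine Finset.orderEmbOfFin_unique h'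
    (fun u => Finset.mem_erase.mpr ⟨fun h => Fin.succAbove_ne t u ((I.orderEmbOfFin hI).injective h),
      Finset.orderEmbOfFin_mem I hI _⟩)
    ((I.orderEmbOfFin hI).strictMono.comp (Fin.strictMono_succAbove t))

lemma erase_card {k n : ℕ} (I : Finset (Fin k)) (hI : I.card = n + 1) (t : Fin (n + 1)) :
    (I.erase (I.orderEmbOfFin hI t)).card = n := by
  rw [Finset.card_erase_of_mem (Finset.orderEmbOfFin_mem I hI t), hI]
  omega

lemma multiCoord_snoc_bound {k n : ℕ} (g : Fin n → (Fin k → ℝ)) (v : Fin k → ℝ)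
    (NG : ℝ) (hNG : ∀ (J : Finset (Fin k)) (hJ : J.card = n), |multiCoord g J hJ| ≤ NG)
    (I : Finset (Fin k)) (hI : I.card = n + 1) :
    |multiCoord (Fin.snoc g v) I hI| ≤ (n + 1) * NG * ‖v‖ := by
  have hNG0 : 0 ≤ NG := le_trans (abs_nonneg _) (hNG (I.erase (I.orderEmbOfFin hI 0)) (erase_card I hI 0))
  rw [multiCoord, Matrix.det_succ_row _ (Fin.last n)]
  refine (Finset.abs_sum_le_sum_abs _ _).trans ?_
  have step : ∀ t : Fin (n+1),
      |(-1 : ℝ) ^ ((Fin.last n : ℕ) + (t : ℕ)) * (Matrix.of fun s t' => (Fin.snoc g v : Fin (n+1) → Fin k → ℝ) s ((I.orderIsoOfFin hI t' : Fin k))) (Fin.last n) t *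
        ((Matrix.of fun s t' => (Fin.snoc g v : Fin (n+1) → Fin k → ℝ) s ((I.orderIsoOfFin hI t' : Fin k))).submatrix (Fin.last n).succAbove t.succAbove).det|
      ≤ ‖v‖ * NG := by
    intro t
    have hminor : ((Matrix.of fun s t' => (Fin.snoc g v : Fin (n+1) → Fin k → ℝ) s ((I.orderIsoOfFin hI t' : Fin k))).submatrix (Fin.last n).succAbove t.succAbove).det
        = multiCoord g (I.erase (I.orderEmbOfFin hI t)) (erase_card I hI t) := by
      rw [multiCoord]
      congr 1
      ext u u'
      simp only [Matrix.submatrix_apply, Matrix.of_apply, Fin.succAbove_last, Fin.snoc_castSucc,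
        Finset.coe_orderIsoOfFin_apply, ← congrFun (colId I hI t (erase_card I hI t)) u']
    rw [hminor, abs_mul, abs_mul]
    have h1 : |(-1 : ℝ) ^ ((Fin.last n : ℕ) + (t : ℕ))| = 1 := by
      rw [abs_pow, abs_neg, abs_one, one_pow]
    rw [h1, one_mul]
    have h2 : |(Matrix.of fun s t' => (Fin.snoc g v : Fin (n+1) → Fin k → ℝ) s ((I.orderIsoOfFin hI t' : Fin k))) (Fin.last n) t| ≤ ‖v‖ := by
      simp only [Matrix.of_apply, Fin.snoc_last]
      exact (Real.norm_eq_abs _) ▸ norm_le_pi_norm v _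
    exact mul_le_mul h2 (hNG _ _) (abs_nonneg _) (norm_nonneg v)
  calc ∑ t : Fin (n+1), _ ≤ ∑ _t : Fin (n+1), ‖v‖ * NG := Finset.sum_le_sum (fun t _ => step t)
    _ = (n + 1) * NG * ‖v‖ := by
      rw [Finset.sum_const, Finset.card_univ, Fintype.card_fin, nsmul_eq_mul]
      push_cast; ring


/-- Lemma 5.1: if `Γ` is a discrete subgroup of `ℝ^k`, `v ∈ ℝ^k` is not in
the ℝ-span of `Γ`, and `Λ` is a discrete subgroup containing `Γ` and `v` whose ℝ-span is
`span(Γ) + ℝv`, then `‖Λ‖ ≤ k·‖Γ‖·‖v‖` (norms of subgroups computed from ℤ-bases,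
`‖v‖` being the sup-norm). -/
theorem stmt6 {k : ℕ} (Γ Λ : AddSubgroup (Fin k → ℝ))
    (hΓd : DiscreteTopology Γ) (hΛd : DiscreteTopology Λ)
    (v : Fin k → ℝ) (hv : v ∉ Submodule.span ℝ (Γ : Set (Fin k → ℝ)))
    (hΓΛ : Γ ≤ Λ) (hvΛ : v ∈ Λ)
    (hspan : Submodule.span ℝ (Λ : Set (Fin k → ℝ)) =
      Submodule.span ℝ (Γ : Set (Fin k → ℝ)) ⊔ Submodule.span ℝ {v})
    {j : ℕ} (bΓ : Module.Basis (Fin j) ℤ (AddSubgroup.toIntSubmodule Γ))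
    (bΛ : Module.Basis (Fin (j + 1)) ℤ (AddSubgroup.toIntSubmodule Λ)) :
    subgroupNorm (fun s => ((bΛ s : AddSubgroup.toIntSubmodule Λ) : Fin k → ℝ)) ≤
      k * subgroupNorm (fun s => ((bΓ s : AddSubgroup.toIntSubmodule Γ) : Fin k → ℝ)) * ‖v‖ := by
  classical
  haveI : DiscreteTopology (AddSubgroup.toIntSubmodule Γ) := hΓd
  haveI : DiscreteTopology (AddSubgroup.toIntSubmodule Λ) := hΛd
  set g : Fin j → (Fin k → ℝ) := fun s => ((bΓ s : AddSubgroup.toIntSubmodule Γ) : Fin k → ℝ)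
    with hgdef
  set w : Fin (j+1) → (Fin k → ℝ) := fun s => ((bΛ s : AddSubgroup.toIntSubmodule Λ) : Fin k → ℝ)
    with hwdef
  have hgind : LinearIndependent ℝ g := zbasis_linInd _ bΓ
  have hwind : LinearIndependent ℝ w := zbasis_linInd _ bΛ
  have hjk : j + 1 ≤ k := by
    have h := hwind.fintype_card_le_finrank
    simpa [Module.finrank_fin_fun] using h
  -- span of Γ is span of range g
  have hGset : (Submodule.span ℤ (Set.range g) : Submodule ℤ (Fin k → ℝ)) =
      AddSubgroup.toIntSubmodule Γ := by
    have h1 : Set.range g = (AddSubgroup.toIntSubmodule Γ).subtype '' (Set.range bΓ) := by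
      ext x
      simp only [hgdef, Set.mem_range, Set.mem_image, Submodule.coe_subtype]
      constructor
      · rintro ⟨s, rfl⟩; exact ⟨bΓ s, ⟨s, rfl⟩, rfl⟩
      · rintro ⟨y, ⟨s, rfl⟩, rfl⟩; exact ⟨s, rfl⟩
    rw [h1, ← Submodule.map_span, bΓ.span_eq, Submodule.map_top, Submodule.range_subtype]
  have hvg : v ∉ Submodule.span ℝ (Set.range g) := by
    have h2 : Submodule.span ℝ (Γ : Set (Fin k → ℝ)) = Submodule.span ℝ (Set.range g) := by
      conv_lhs => rw [← AddSubgroup.coe_toIntSubmodule Γ, ← hGset]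
      exact Submodule.span_span_of_tower (R := ℤ) (S := ℝ) (s := Set.range g)
    rwa [h2] at hv
  set gv : Fin (j+1) → (Fin k → ℝ) := Fin.snoc g v with hgvdef
  have hgvind : LinearIndependent ℝ gv := linearIndependent_fin_snoc.mpr ⟨hgind, hvg⟩
  have hmemΛ : ∀ s, gv s ∈ AddSubgroup.toIntSubmodule Λ := by
    intro s
    induction s using Fin.lastCases with
    | last => simp only [hgvdef, Fin.snoc_last]; exact hvΛ
    | cast i =>
      simp only [hgvdef, Fin.snoc_castSucc]
      exact hΓΛ (bΓ i).2
  set A : Matrix (Fin (j+1)) (Fin (j+1)) ℤ :=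
    Matrix.of fun s t => bΛ.repr ⟨gv s, hmemΛ s⟩ t with hAdef
  have hA : ∀ s i, gv s i = ∑ t, (A s t : ℝ) * w t i := by
    intro s i
    have h3 : (⟨gv s, hmemΛ s⟩ : AddSubgroup.toIntSubmodule Λ)
        = ∑ t, bΛ.repr ⟨gv s, hmemΛ s⟩ t • bΛ t := (bΛ.sum_repr _).symm
    have h4 := congrArg (fun x : AddSubgroup.toIntSubmodule Λ => (x : Fin k → ℝ) i) h3
    simpa [hAdef, hwdef, AddSubmonoidClass.coe_finset_sum, Finset.sum_apply, Pi.smul_apply,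
      zsmul_eq_mul, -Module.Basis.sum_repr] using h4
  have hdet : A.det ≠ 0 := by
    intro h0
    have h0' : (A.map ((Int.cast : ℤ → ℝ))).det = 0 := by
      have := RingHom.map_det (Int.castRingHom ℝ) A
      simp only [Int.coe_castRingHom, RingHom.mapMatrix_apply] at this
      rw [← this, h0, Int.cast_zero]
    obtain ⟨c, hc0, hc⟩ := Matrix.exists_vecMul_eq_zero_iff.mpr h0'
    have hzero : ∑ s, c s • gv s = 0 := by
      funext i
      rw [Finset.sum_apply]
      simp_rw [Pi.smul_apply, smul_eq_mul, hA, Finset.mul_sum]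
      rw [Finset.sum_comm]
      have : ∀ t, ∑ s, c s * ((A s t : ℝ) * w t i) = 0 := by
        intro t
        have hct := congrFun hc t
        simp only [Matrix.vecMul, dotProduct, Matrix.map_apply, Pi.zero_apply] at hct
        calc ∑ s, c s * ((A s t : ℝ) * w t i) = (∑ s, c s * (A s t : ℝ)) * w t i := by
              rw [Finset.sum_mul]; congr 1; funext s; ring
          _ = 0 := by rw [hct, zero_mul]
      simp only [this, Finset.sum_const_zero, Pi.zero_apply]
    have hall := Fintype.linearIndependent_iff.mp hgvind c hzero
    exact hc0 (funext hall)
  have hdetR : (1 : ℝ) ≤ |((A.det : ℤ) : ℝ)| := by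
    rw [← Int.cast_abs]
    exact_mod_cast Int.one_le_abs hdet
  have hmc : ∀ (I : Finset (Fin k)) (hI : I.card = j+1),
      multiCoord gv I hI = ((A.det : ℤ) : ℝ) * multiCoord w I hI := by
    intro I hI
    unfold multiCoord
    have hM : (Matrix.of fun s t => gv s ((I.orderIsoOfFin hI t : Fin k)))
        = (A.map (Int.cast : ℤ → ℝ)) * (Matrix.of fun s t => w s ((I.orderIsoOfFin hI t : Fin k))) := by
      ext s t
      simp only [Matrix.mul_apply, Matrix.map_apply, Matrix.of_apply]
      exact hA s _
    rw [hM, Matrix.det_mul]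
    congr 1
    have := RingHom.map_det (Int.castRingHom ℝ) A
    simp only [Int.coe_castRingHom, RingHom.mapMatrix_apply] at this
    rw [← this]
  set NG := subgroupNorm g with hNGdef
  have hNG : ∀ (J : Finset (Fin k)) (hJ : J.card = j), |multiCoord g J hJ| ≤ NG := by
    intro J hJ
    rw [hNGdef, subgroupNorm]
    exact le_ciSup (f := fun I : {s : Finset (Fin k) // s.card = j} => |multiCoord g I.1 I.2|)
      (Set.Finite.bddAbove (Set.finite_range _)) (⟨J, hJ⟩ : {s : Finset (Fin k) // s.card = j})
  have hNG0 : 0 ≤ NG := by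
    obtain ⟨J, _, hJ⟩ := Finset.exists_subset_card_eq (s := (Finset.univ : Finset (Fin k))) (n := j)
      (by simp only [Finset.card_univ, Fintype.card_fin]; omega)
    exact le_trans (abs_nonneg _) (hNG J hJ)
  obtain ⟨I₀, _, hI₀⟩ := Finset.exists_subset_card_eq (s := (Finset.univ : Finset (Fin k))) (n := j+1)
    (by simp only [Finset.card_univ, Fintype.card_fin]; omega)
  haveI : Nonempty {s : Finset (Fin k) // s.card = j+1} := ⟨⟨I₀, hI₀⟩⟩
  rw [subgroupNorm]
  refine ciSup_le ?_
  rintro ⟨I, hI⟩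
  have h5 : |multiCoord w I hI| ≤ |multiCoord gv I hI| := by
    rw [hmc I hI, abs_mul]
    nlinarith [abs_nonneg (multiCoord w I hI)]
  have h6 := multiCoord_snoc_bound g v NG hNG I hI
  rw [← hgvdef] at h6
  have h7 : ((j:ℝ) + 1) * NG * ‖v‖ ≤ (k : ℝ) * NG * ‖v‖ := by
    have hk : ((j:ℝ) + 1) ≤ (k : ℝ) := by exact_mod_cast hjk
    exact mul_le_mul_of_nonneg_right (mul_le_mul_of_nonneg_right hk hNG0) (norm_nonneg v)
  exact le_trans h5 (le_trans h6 h7)
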